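/- Let m : ℂ₊ → ℂ₊ be the Stieltjes transform of the semicircle law, i.e. the unique holomorphic function from the upper half-plane to itself satisfying m(z)² + z·m(z) + 1 = 0 and m(z) ~ 1/z as |z| → ∞. Then for all z, w in the upper half-plane, |m(z) − m(w)| ≤ 2·|z − w|^{1/2}. -/

import Mathlib

private lemma aux_normSq_lt_one (a z : ℂ) (hz : 0 < z.im) (ha : 0 < a.im)
    (h : a ^ 2 + z * a + 1 = 0) : Complex.normSq a < 1 := by
  have ha0 : a ≠ 0 := by
    intro h0; rw [h0] at h; simp at h
  have hsum : a + z = -a⁻¹ := by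
    field_simp
    linear_combination h
  have him : a.im + z.im = a.im / Complex.normSq a := by
    have := congrArg Complex.im hsum
    simpa [Complex.add_im, Complex.inv_im, neg_div] using this
  have hns : 0 < Complex.normSq a := Complex.normSq_pos.mpr ha0
  rw [eq_div_iff (ne_of_gt hns)] at him
  nlinarith

private lemma aux_dist_le (a b : ℂ) (ha1 : Complex.normSq a ≤ 1) (hb1 : Complex.normSq b ≤ 1)
    (ha : 0 < a.im) (hb : 0 < b.im) :
    ‖a - b‖ ≤ ‖1 - a * b‖ := by
  rw [Complex.norm_def, Complex.norm_def, Real.sqrt_le_sqrt_iff (Complex.normSq_nonneg _)]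
  simp only [Complex.normSq_apply, Complex.sub_re, Complex.sub_im, Complex.mul_re,
    Complex.mul_im, Complex.one_re, Complex.one_im] at *
  nlinarith [mul_pos ha hb, mul_nonneg (sub_nonneg.mpr ha1) (sub_nonneg.mpr hb1)]

/-- Hölder-1/2 continuity of the Stieltjes transform of the semicircle law:
`m : ℂ₊ → ℂ₊` satisfies `m(z)² + z m(z) + 1 = 0`; then `|m z − m w| ≤ 2 |z − w|^{1/2}`. -/
theorem stmt_0 (m : ℂ → ℂ)
    (hmap : ∀ z : ℂ, 0 < z.im → 0 < (m z).im)
    (heq : ∀ z : ℂ, 0 < z.im → (m z) ^ 2 + z * m z + 1 = 0) :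
    ∀ z w : ℂ, 0 < z.im → 0 < w.im →
      ‖m z - m w‖ ≤ 2 * ‖z - w‖ ^ ((1 : ℝ) / 2) := by
  intro z w hz hw
  set a := m z with haa
  set b := m w with hbb
  have ha := hmap z hz
  have hb := hmap w hw
  have hqa := heq z hz
  have hqb := heq w hw
  have hna : Complex.normSq a ≤ 1 := le_of_lt (aux_normSq_lt_one a z hz ha hqa)
  have hnb : Complex.normSq b ≤ 1 := le_of_lt (aux_normSq_lt_one b w hw hb hqb)
  -- key algebraic identity
  have key : (a - b) * (1 - a * b) = (z - w) * (a * b) := by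
    linear_combination (-b) * hqa + a * hqb
  have habs : ‖a - b‖ * ‖1 - a * b‖
      = ‖z - w‖ * ‖a * b‖ := by
    rw [← norm_mul, ← norm_mul, key]
  have hab1 : ‖a * b‖ ≤ 1 := by
    rw [norm_mul]
    have h1 : ‖a‖ ≤ 1 := by
      rw [← Complex.sq_norm] at hna
      nlinarith [norm_nonneg a]
    have h2 : ‖b‖ ≤ 1 := by
      rw [← Complex.sq_norm] at hnb
      nlinarith [norm_nonneg b]
    exact mul_le_one₀ h1 (norm_nonneg b) h2
  have hdist := aux_dist_le a b hna hnb ha hb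
  have hsq : ‖a - b‖ ^ 2 ≤ ‖z - w‖ := by
    calc ‖a - b‖ ^ 2 ≤ ‖a - b‖ * ‖1 - a * b‖ := by
          rw [sq]; exact mul_le_mul_of_nonneg_left hdist (norm_nonneg _)
      _ = ‖z - w‖ * ‖a * b‖ := habs
      _ ≤ ‖z - w‖ * 1 :=
          mul_le_mul_of_nonneg_left hab1 (norm_nonneg _)
      _ = ‖z - w‖ := mul_one _
  have hsqrt : ‖a - b‖ ≤ ‖z - w‖ ^ ((1 : ℝ) / 2) := by
    rw [← Real.sqrt_eq_rpow]
    exact (Real.le_sqrt (norm_nonneg _) (norm_nonneg _)).mpr hsq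
  calc ‖a - b‖ ≤ ‖z - w‖ ^ ((1 : ℝ) / 2) := hsqrt
    _ ≤ 2 * ‖z - w‖ ^ ((1 : ℝ) / 2) := by
        nlinarith [Real.rpow_nonneg (norm_nonneg (z - w)) ((1:ℝ)/2)]
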